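/- Let F be a rigid field and φ₁, φ₂, φ₃ anisotropic quadratic forms over F such that φ₁ ⊥ φ₂ is anisotropic. Then φ₁ ⊥ φ₂ ⊥ φ₃ is isotropic if and only if: (1) at least one of φ₁ ⊥ φ₃ and φ₂ ⊥ φ₃ is isotropic; or (2) s(F) = 2 and D_F(φ₁) ∩ D_F(φ₂) ∩ D_F(φ₃) ≠ ∅. -/

import Mathlib

namespace PN

variable (F : Type*) [Field F]

/-- The diagonal quadratic form with diagonal entries given by a list. -/
noncomputable def qf (l : List F) : QuadraticForm F (Fin l.length → F) :=
  QuadraticMap.weightedSumSquares F l.get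

/-- Isometry of diagonal quadratic forms. -/
def Isom (l l' : List F) : Prop :=
  Nonempty (QuadraticMap.IsometryEquiv (qf F l) (qf F l'))

/-- Diagonalization of the sum of `k` hyperbolic planes. -/
def hypList (k : ℕ) : List F :=
  List.replicate k (1 : F) ++ List.replicate k (-1 : F)

/-- A (diagonalized) form is hyperbolic if it is isometric to a sum of hyperbolic planes. -/
def IsHyp (l : List F) : Prop := ∃ k : ℕ, Isom F l (hypList F k)

def negList (l : List F) : List F := l.map (fun x => -x)

/-- Witt equivalence of diagonalized quadratic forms. -/
def WittEquiv (l l' : List F) : Prop := IsHyp F (l ++ negList F l')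

/-- Nondegeneracy: all diagonal entries are nonzero. -/
def Nondeg (l : List F) : Prop := ∀ x ∈ l, x ≠ 0

/-- Diagonalization of the Pfister form `⟪a₁,…,aₙ⟫ = ⟨1,-a₁⟩⊗⋯⊗⟨1,-aₙ⟩`. -/
def pfister : List F → List F
  | [] => [1]
  | a :: l => pfister l ++ (pfister l).map (fun x => -a * x)

/-- `l` is a diagonalization of an `n`-fold Pfister form. -/
def IsPfister (n : ℕ) (l : List F) : Prop :=
  ∃ a : Fin n → F, (∀ i, a i ≠ 0) ∧ l = pfister F (List.ofFn a)

/-- `l` is a diagonalization of a form similar to an `n`-fold Pfister form. -/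
def IsGP (n : ℕ) (l : List F) : Prop :=
  ∃ c : F, c ≠ 0 ∧ ∃ p : List F, IsPfister F n p ∧ l = p.map (fun x => c * x)

/-- The Witt class of `l` lies in `IⁿF`, i.e. it is a sum of classes of
forms similar to `n`-fold Pfister forms. -/
def InI (n : ℕ) (l : List F) : Prop :=
  ∃ L : List (List F), (∀ p ∈ L, IsGP F n p) ∧ WittEquiv F l L.flatten

/-- The (scaled) `n`-Pfister number of `l` (`⊤` if the Witt class of `l` is not in `IⁿF`). -/
noncomputable def GPnum (n : ℕ) (l : List F) : ℕ∞ :=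
  sInf {k : ℕ∞ | ∃ L : List (List F), (L.length : ℕ∞) = k ∧
    (∀ p ∈ L, IsGP F n p) ∧ WittEquiv F l L.flatten}

/-- The unscaled `n`-Pfister number: least number of genuine `n`-fold Pfister
forms with signs `±1` whose Witt classes sum to that of `l`. -/
noncomputable def Pnum (n : ℕ) (l : List F) : ℕ∞ :=
  sInf {k : ℕ∞ | ∃ L : List (List F), (L.length : ℕ∞) = k ∧
    (∀ p ∈ L, IsPfister F n p ∨ ∃ q : List F, IsPfister F n q ∧ p = negList F q) ∧
    WittEquiv F l L.flatten}

/-- `GP_n(F, d)`: the supremum of `n`-Pfister numbers of forms in `IⁿF` of dimension `≤ d`. -/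
noncomputable def GPsup (n : ℕ) (d : ℕ) : ℕ∞ :=
  ⨆ l ∈ {l : List F | Nondeg F l ∧ InI F n l ∧ l.length ≤ d}, GPnum F n l

/-- `a` is a nonzero value represented by the form `l`. -/
def Represents (l : List F) (a : F) : Prop := a ≠ 0 ∧ ∃ x, qf F l x = a

/-- The set of nonzero represented values. -/
def D (l : List F) : Set F := {a | Represents F l a}

def Anisotropic (l : List F) : Prop := (qf F l).Anisotropic

def SameSquareClass (a b : F) : Prop := ∃ c : F, c ≠ 0 ∧ a = b * c ^ 2

/-- A field is rigid if every anisotropic binary form represents at most two square classes. -/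
def Rigid : Prop := ∀ x y : F, x ≠ 0 → y ≠ 0 → Anisotropic F [x, y] →
  ∃ u v : F, ∀ a : F, Represents F [x, y] a →
    SameSquareClass F a u ∨ SameSquareClass F a v

/-- The level `s(F)`: the least `n` such that `-1` is a sum of `n` squares (`⊤` if none). -/
noncomputable def level : ℕ∞ :=
  sInf {m : ℕ∞ | ∃ n : ℕ, m = (n : ℕ∞) ∧ ∃ f : Fin n → F, (-1 : F) = ∑ i, f i ^ 2}

/-- `l` is (isometric to) a subform of `l'`. -/
def Subform (l l' : List F) : Prop := ∃ r : List F, Isom F l' (l ++ r)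

end PN


section Aux13

open PN

variable {F : Type*} [Field F]

private lemma qf_apply' (l : List F) (x : Fin l.length → F) :
    qf F l x = ∑ i, l.get i * (x i * x i) := by
  simp [qf, smul_eq_mul]

private lemma qf_append' (l l' : List F) (x : Fin (l ++ l').length → F) :
    qf F (l ++ l') x
      = qf F l (fun i => x (Fin.cast (@List.length_append _ l l').symm (Fin.castAdd l'.length i)))
      + qf F l' (fun j => x (Fin.cast (@List.length_append _ l l').symm (Fin.natAdd l.length j))) := by
  rw [qf_apply', qf_apply', qf_apply']
  rw [← (finCongr (@List.length_append _ l l').symm).sum_comp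
    (fun i => (l ++ l').get i * (x i * x i))]
  rw [Fin.sum_univ_add]
  congr 1
  · exact Finset.sum_congr rfl fun i _ => by
      congr 1; simp [List.get_eq_getElem, List.getElem_append_left]
  · exact Finset.sum_congr rfl fun j _ => by
      congr 1; simp [List.get_eq_getElem, List.getElem_append_right]

private lemma qf_merge' (l l' : List F) (y : Fin l.length → F) (z : Fin l'.length → F) :
    ∃ x : Fin (l ++ l').length → F,
      qf F (l ++ l') x = qf F l y + qf F l' z ∧ (y ≠ 0 → x ≠ 0) ∧ (z ≠ 0 → x ≠ 0) := by
  have h := @List.length_append _ l l'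
  refine ⟨fun i => Fin.addCases y z (Fin.cast h i), ?_, ?_, ?_⟩
  · rw [qf_append']
    congr 1
    · congr 1; funext i; simp
    · congr 1; funext j; simp
  · intro hy hx
    apply hy; funext i
    have := congrFun hx (Fin.cast h.symm (Fin.castAdd l'.length i))
    simpa using this
  · intro hz hx
    apply hz; funext j
    have := congrFun hx (Fin.cast h.symm (Fin.natAdd l.length j))
    simpa using this

private lemma isotropic_append_iff' (l l' : List F) :
    ¬ Anisotropic F (l ++ l') ↔ ∃ (y : Fin l.length → F) (z : Fin l'.length → F),
      (y ≠ 0 ∨ z ≠ 0) ∧ qf F l y + qf F l' z = 0 := by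
  constructor
  · intro h
    rw [Anisotropic, QuadraticMap.Anisotropic] at h
    push_neg at h
    obtain ⟨x, hx0, hxne⟩ := h
    have hlen := @List.length_append _ l l'
    refine ⟨_, _, ?_, (qf_append' l l' x).symm.trans hx0⟩
    by_contra hc
    push_neg at hc
    apply hxne
    funext i
    rcases lt_or_ge i.val l.length with hi | hi
    · have key : i = Fin.cast hlen.symm (Fin.castAdd l'.length ⟨i.val, hi⟩) := by
        apply Fin.ext; simp
      calc x i = x (Fin.cast hlen.symm (Fin.castAdd l'.length ⟨i.val, hi⟩)) := by rw [← key]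
        _ = 0 := congrFun hc.1 ⟨i.val, hi⟩
    · have hi2 : i.val < l.length + l'.length := by
        have := i.isLt; omega
      have hj : i.val - l.length < l'.length := by omega
      have key : i = Fin.cast hlen.symm (Fin.natAdd l.length ⟨i.val - l.length, hj⟩) := by
        apply Fin.ext; simp; omega
      calc x i = x (Fin.cast hlen.symm (Fin.natAdd l.length ⟨i.val - l.length, hj⟩)) := by
            rw [← key]
        _ = 0 := congrFun hc.2 ⟨i.val - l.length, hj⟩
  · rintro ⟨y, z, hne, hsum⟩
    obtain ⟨x, hx, hy, hz⟩ := qf_merge' l l' y z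
    intro han
    have hx0 : x ≠ 0 := by rcases hne with h | h; exacts [hy h, hz h]
    exact hx0 (han x (hx.trans hsum))

private lemma qf_pair' (a b : F) (v : Fin 2 → F) :
    qf F [a, b] v = a * v 0 ^ 2 + b * v 1 ^ 2 := by
  rw [qf_apply']
  show ∑ i : Fin 2, [a, b].get i * (v i * v i) = a * v 0 ^ 2 + b * v 1 ^ 2
  rw [Fin.sum_univ_two]
  show a * (v 0 * v 0) + b * (v 1 * v 1) = _
  ring

private lemma qf_smul' (l : List F) (t : F) (x : Fin l.length → F) :
    qf F l (t • x) = t ^ 2 * qf F l x := by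
  rw [QuadraticMap.map_smul, smul_eq_mul]; ring

private lemma ssc_symm' {a b : F} (h : SameSquareClass F a b) : SameSquareClass F b a := by
  obtain ⟨c, hc, rfl⟩ := h
  exact ⟨c⁻¹, inv_ne_zero hc, by field_simp⟩

private lemma ssc_trans' {a b c : F} (h1 : SameSquareClass F a b)
    (h2 : SameSquareClass F b c) : SameSquareClass F a c := by
  obtain ⟨u, hu, rfl⟩ := h1
  obtain ⟨v, hv, rfl⟩ := h2
  exact ⟨v * u, mul_ne_zero hv hu, by ring⟩

private lemma rep_pair_left' (a b : F) (ha : a ≠ 0) : Represents F [a, b] a :=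
  ⟨ha, ![1, 0], by rw [qf_pair']; norm_num⟩

private lemma rep_pair_right' (a b : F) (hb : b ≠ 0) : Represents F [a, b] b :=
  ⟨hb, ![0, 1], by rw [qf_pair']; norm_num⟩

private lemma rep_pair_sum' (a b : F) (hab : a + b ≠ 0) : Represents F [a, b] (a + b) :=
  ⟨hab, ![1, 1], by rw [qf_pair']; norm_num⟩

private lemma anisotropic_pair' {a b : F}
    (h : ∀ v : Fin 2 → F, a * v 0 ^ 2 + b * v 1 ^ 2 = 0 → v = 0) :
    Anisotropic F [a, b] := by
  intro v hv
  have h2 : (fun i : Fin 2 => v i) = 0 := h _ (by rw [← qf_pair']; exact hv)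
  funext i
  exact congrFun h2 i

private lemma level_eq_two' (h1 : (-1 : F) ≠ 0) (h2 : ∀ t : F, (-1 : F) ≠ t ^ 2)
    (s t : F) (hst : (-1 : F) = s ^ 2 + t ^ 2) : level F = 2 := by
  apply le_antisymm
  · apply sInf_le
    exact ⟨2, by norm_num, ![s, t], by rw [Fin.sum_univ_two]; simpa using hst⟩
  · apply le_sInf
    rintro m ⟨n, rfl, f, hf⟩
    match n with
    | 0 => rw [Fin.sum_univ_zero] at hf; exact (h1 hf).elim
    | 1 => rw [Fin.sum_univ_one] at hf; exact absurd hf (h2 (f 0))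
    | (k + 2) => exact_mod_cast by exact_mod_cast Nat.le_add_left 2 k

private lemma sum_two_squares_of_level_two' (h : level F = 2) :
    ∃ s t : F, (-1 : F) = s ^ 2 + t ^ 2 := by
  have hne : {m : ℕ∞ | ∃ n : ℕ, m = (n : ℕ∞) ∧
      ∃ f : Fin n → F, (-1 : F) = ∑ i, f i ^ 2}.Nonempty := by
    by_contra hc
    rw [Set.not_nonempty_iff_eq_empty] at hc
    rw [level, hc, sInf_empty] at h
    exact absurd h (by norm_num)
  have hmem := csInf_mem hne
  rw [← level, h] at hmem
  obtain ⟨n, hn, f, hf⟩ := hmem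
  have : n = 2 := by exact_mod_cast hn.symm
  subst this
  exact ⟨f 0, f 1, by rwa [Fin.sum_univ_two] at hf⟩

private lemma witness_ne_zero' {l : List F} {x : Fin l.length → F} {a : F}
    (hx : qf F l x = a) (ha : a ≠ 0) : x ≠ 0 := by
  intro h0
  exact ha (by rw [← hx, h0, map_zero])

end Aux13

open PN in
theorem stmt_13 (F : Type*) [Field F] (hF : (2 : F) ≠ 0)
    (hrigid : PN.Rigid F) (φ₁ φ₂ φ₃ : List F)
    (h₁ : PN.Anisotropic F φ₁) (h₂ : PN.Anisotropic F φ₂) (h₃ : PN.Anisotropic F φ₃)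
    (h₁₂ : PN.Anisotropic F (φ₁ ++ φ₂))
    (hn₁ : PN.Nondeg F φ₁) (hn₂ : PN.Nondeg F φ₂) (hn₃ : PN.Nondeg F φ₃) :
    ¬ PN.Anisotropic F (φ₁ ++ φ₂ ++ φ₃) ↔
      ((¬ PN.Anisotropic F (φ₁ ++ φ₃) ∨ ¬ PN.Anisotropic F (φ₂ ++ φ₃)) ∨
        (PN.level F = 2 ∧ (PN.D F φ₁ ∩ PN.D F φ₂ ∩ PN.D F φ₃).Nonempty)) := by
  constructor
  · intro hiso
    rw [isotropic_append_iff'] at hiso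
    obtain ⟨u, w, hne, hsum⟩ := hiso
    obtain ⟨y, z, hyz⟩ : ∃ y z, qf F (φ₁ ++ φ₂) u = qf F φ₁ y + qf F φ₂ z :=
      ⟨_, _, qf_append' φ₁ φ₂ u⟩
    rw [hyz] at hsum
    by_cases hw : w = 0
    · -- then φ₁ ⊥ φ₂ is isotropic, contradiction
      have hu : u ≠ 0 := by
        rcases hne with h | h
        · exact h
        · exact absurd hw h
      exfalso
      apply hu
      apply h₁₂ u
      rw [hyz]
      rw [hw, map_zero, add_zero] at hsum
      exact hsum
    · have hc : qf F φ₃ w ≠ 0 := fun h => hw (h₃ w h)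
      by_cases ha : qf F φ₁ y = 0
      · -- φ₂ ⊥ φ₃ is isotropic
        left; right
        rw [isotropic_append_iff']
        exact ⟨z, w, Or.inr hw, by linear_combination hsum - ha⟩
      · by_cases hb : qf F φ₂ z = 0
        · -- φ₁ ⊥ φ₃ is isotropic
          left; left
          rw [isotropic_append_iff']
          exact ⟨y, w, Or.inr hw, by linear_combination hsum - hb⟩
        · have hy : y ≠ 0 := witness_ne_zero' rfl ha
          have hz : z ≠ 0 := witness_ne_zero' rfl hb
          have habne : qf F φ₁ y + qf F φ₂ z ≠ 0 := by
            intro h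
            exact hc (by linear_combination hsum - h)
          by_cases hca : SameSquareClass F (qf F φ₁ y + qf F φ₂ z) (qf F φ₁ y)
          · left; left
            rw [isotropic_append_iff']
            obtain ⟨t, ht, hteq⟩ := hca
            refine ⟨t • y, w, Or.inl (smul_ne_zero ht hy), ?_⟩
            rw [qf_smul']
            linear_combination hsum - hteq
          · by_cases hcb : SameSquareClass F (qf F φ₁ y + qf F φ₂ z) (qf F φ₂ z)
            · left; right
              rw [isotropic_append_iff']
              obtain ⟨t, ht, hteq⟩ := hcb
              refine ⟨t • z, w, Or.inl (smul_ne_zero ht hz), ?_⟩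
              rw [qf_smul']
              linear_combination hsum - hteq
            · have hanab : Anisotropic F [qf F φ₁ y, qf F φ₂ z] := by
                apply anisotropic_pair'
                intro v hv
                by_contra hvne
                have hv01 : v 0 ≠ 0 ∨ v 1 ≠ 0 := by
                  by_contra hcc
                  push_neg at hcc
                  exact hvne (funext fun i => by fin_cases i <;> simp [hcc.1, hcc.2])
                have hnan : ¬ Anisotropic F (φ₁ ++ φ₂) := by
                  rw [isotropic_append_iff']
                  refine ⟨v 0 • y, v 1 • z, ?_, ?_⟩
                  · rcases hv01 with h | h
                    · exact Or.inl (smul_ne_zero h hy)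
                    · exact Or.inr (smul_ne_zero h hz)
                  · rw [qf_smul', qf_smul']
                    linear_combination hv
                exact hnan h₁₂
              by_cases hab2 : SameSquareClass F (qf F φ₁ y) (qf F φ₂ z)
              · -- the level-2 case
                obtain ⟨s, hs, hseq⟩ := hab2
                have hm10 : (-1 : F) ≠ 0 := by norm_num
                have hm1 : ∀ i : F, (-1 : F) ≠ i ^ 2 := by
                  intro i hi
                  have hi0 : i ≠ 0 := by
                    intro h0
                    rw [h0] at hi
                    norm_num at hi
                  have hnan : ¬ Anisotropic F (φ₁ ++ φ₂) := by
                    rw [isotropic_append_iff']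
                    refine ⟨y, (i * s) • z, Or.inl hy, ?_⟩
                    rw [qf_smul']
                    linear_combination (-(s ^ 2) * qf F φ₂ z) * hi + hseq
                  exact hnan h₁₂
                have hbd : qf F φ₂ z * (s ^ 2 + 1) ≠ 0 := by
                  intro h
                  exact habne (by linear_combination h + hseq)
                have hdnz : (s ^ 2 + 1 : F) ≠ 0 := fun h => hbd (by rw [h, mul_zero])
                have hdns : ∀ e : F, (s ^ 2 + 1 : F) ≠ e ^ 2 := by
                  intro e he
                  have he0 : e ≠ 0 := by
                    intro h0
                    rw [h0] at he
                    exact hdnz (by simpa using he)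
                  exact hcb ⟨e, he0, by linear_combination hseq + qf F φ₂ z * he⟩
                have hand : Anisotropic F [(1 : F), -(s ^ 2 + 1)] := by
                  apply anisotropic_pair'
                  intro v hv
                  by_cases hv1 : v 1 = 0
                  · have hv0 : v 0 = 0 := by
                      have : v 0 ^ 2 = 0 := by linear_combination hv + (s ^ 2 + 1) * v 1 * hv1
                      exact pow_eq_zero_iff (by norm_num) |>.mp this
                    exact funext fun i => by fin_cases i <;> assumption
                  · exact absurd (show (s ^ 2 + 1 : F) = (v 0 / v 1) ^ 2 by
                      field_simp
                      linear_combination -hv) (hdns (v 0 / v 1))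
                obtain ⟨U, V, hUV⟩ :=
                  hrigid 1 (-(s ^ 2 + 1)) one_ne_zero (neg_ne_zero.mpr hdnz) hand
                have r1 := hUV 1 (rep_pair_left' _ _ one_ne_zero)
                have rm := hUV (-1) ⟨hm10, ![s, 1], by rw [qf_pair']; norm_num⟩
                have rd := hUV (-(s ^ 2 + 1))
                  (rep_pair_right' _ _ (neg_ne_zero.mpr hdnz))
                have hex1 : ¬ SameSquareClass F (-1 : F) 1 := by
                  rintro ⟨e, he, heq⟩
                  exact hm1 e (by linear_combination heq)
                have hex2 : ¬ SameSquareClass F (-1 : F) (-(s ^ 2 + 1)) := by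
                  rintro ⟨e, he, heq⟩
                  apply hdns e⁻¹
                  have h1 : (s ^ 2 + 1) * e ^ 2 = 1 := by linear_combination heq
                  calc (s ^ 2 + 1 : F) = (s ^ 2 + 1) * (e * e⁻¹) ^ 2 := by
                        rw [mul_inv_cancel₀ he]; ring
                    _ = ((s ^ 2 + 1) * e ^ 2) * (e⁻¹) ^ 2 := by ring
                    _ = (e⁻¹) ^ 2 := by rw [h1, one_mul]
                have hkey : SameSquareClass F (1 : F) (-(s ^ 2 + 1)) := by
                  rcases r1 with h1 | h1 <;> rcases rm with h2 | h2 <;>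
                    rcases rd with h3 | h3
                  · exact absurd (ssc_trans' h2 (ssc_symm' h1)) hex1
                  · exact absurd (ssc_trans' h2 (ssc_symm' h1)) hex1
                  · exact ssc_trans' h1 (ssc_symm' h3)
                  · exact absurd (ssc_trans' h2 (ssc_symm' h3)) hex2
                  · exact absurd (ssc_trans' h2 (ssc_symm' h3)) hex2
                  · exact ssc_trans' h1 (ssc_symm' h3)
                  · exact absurd (ssc_trans' h2 (ssc_symm' h1)) hex1
                  · exact absurd (ssc_trans' h2 (ssc_symm' h1)) hex1
                obtain ⟨e, he, heq⟩ := hkey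
                -- 1 = -(s^2+1) * e^2, so -(s^2+1) = (e⁻¹)^2
                have ht2 : -(s ^ 2 + 1 : F) = (e⁻¹) ^ 2 := by
                  calc -(s ^ 2 + 1 : F) = -(s ^ 2 + 1) * (e * e⁻¹) ^ 2 := by
                        rw [mul_inv_cancel₀ he]; ring
                    _ = (-(s ^ 2 + 1) * e ^ 2) * (e⁻¹) ^ 2 := by ring
                    _ = (e⁻¹) ^ 2 := by rw [← heq, one_mul]
                have hlev : level F = 2 :=
                  level_eq_two' hm10 hm1 s e⁻¹ (by linear_combination ht2)
                right
                refine ⟨hlev, qf F φ₂ z, ⟨⟨?_, ?_⟩, ?_⟩⟩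
                · -- qb ∈ D φ₁ : witness s⁻¹ • y
                  refine ⟨hb, s⁻¹ • y, ?_⟩
                  rw [qf_smul']
                  field_simp
                  linear_combination hseq
                · exact ⟨hb, z, rfl⟩
                · -- qb ∈ D φ₃ : witness e • w since qf φ₃ w = qb * (e⁻¹)^2 ...
                  refine ⟨hb, e • w, ?_⟩
                  rw [qf_smul']
                  -- qf φ₃ w = -(qa + qb) = -(qb(s^2+1)) = qb * (e⁻¹)^2 / ...
                  -- e^2 * qf φ₃ w = qb
                  have hw3 : qf F φ₃ w = -(qf F φ₁ y + qf F φ₂ z) := by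
                    linear_combination hsum
                  rw [hw3, hseq]
                  linear_combination (-(qf F φ₂ z)) * heq
              · -- three distinct square classes: contradiction with rigidity
                exfalso
                obtain ⟨U, V, hUV⟩ := hrigid _ _ ha hb hanab
                have r1 := hUV _ (rep_pair_left' _ _ ha)
                have r2 := hUV _ (rep_pair_right' _ _ hb)
                have r3 := hUV _ (rep_pair_sum' _ _ habne)
                rcases r1 with h1 | h1 <;> rcases r2 with h2 | h2 <;>
                  rcases r3 with h3 | h3 <;>
                  first
                    | exact hab2 (ssc_trans' h1 (ssc_symm' h2))
                    | exact hca (ssc_trans' h3 (ssc_symm' h1))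
                    | exact hcb (ssc_trans' h3 (ssc_symm' h2))
  · rintro ((h | h) | ⟨hlev, w, hw⟩)
    · rw [isotropic_append_iff'] at h ⊢
      obtain ⟨y, w, hne, hsum⟩ := h
      obtain ⟨x, hx, hxy, _⟩ := qf_merge' φ₁ φ₂ y 0
      refine ⟨x, w, ?_, ?_⟩
      · rcases hne with h | h
        · exact Or.inl (hxy h)
        · exact Or.inr h
      · rw [hx, map_zero, add_zero]
        exact hsum
    · rw [isotropic_append_iff'] at h ⊢
      obtain ⟨z, w, hne, hsum⟩ := h
      obtain ⟨x, hx, _, hxz⟩ := qf_merge' φ₁ φ₂ 0 z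
      refine ⟨x, w, ?_, ?_⟩
      · rcases hne with h | h
        · exact Or.inl (hxz h)
        · exact Or.inr h
      · rw [hx, map_zero, zero_add]
        exact hsum
    · obtain ⟨s, t, hst⟩ := sum_two_squares_of_level_two' hlev
      obtain ⟨⟨⟨hw0, x1, hx1⟩, -, x2, hx2⟩, -, x3, hx3⟩ := hw
      have hx1ne : x1 ≠ 0 := witness_ne_zero' hx1 hw0
      obtain ⟨u, hu, hux, -⟩ := qf_merge' φ₁ φ₂ x1 (s • x2)
      rw [isotropic_append_iff']
      refine ⟨u, t • x3, Or.inl (hux hx1ne), ?_⟩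
      rw [hu, qf_smul', qf_smul', hx1, hx2, hx3]
      linear_combination (-w) * hst
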